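/- Let δ and κ be integers with 3 ≤ κ < δ − 3, and let t be a positive integer with t > (δ − 1)²/(δ + 1 − κ) such that h := t·(δ + 1 − κ)/(δ − 1) − (δ − 1) is a positive integer. Then there exists a finite simple graph G with exactly n = κ·t vertices, minimum degree exactly δ, and maximum matching of size exactly t, which admits an edge 2-coloring using at least t·(1 + (κ − 2)/(δ − 1)) colors. -/

import Mathlib

open SimpleGraph

/-- `C` is an edge 2-coloring of `G`: for every vertex, the edges incident to it
carry at most 2 distinct colors. -/
def IsEdge2Coloring {V : Type*} (G : SimpleGraph V) (C : Sym2 V → ℕ) : Prop :=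
  ∀ v : V, (C '' G.incidenceSet v).ncard ≤ 2

/-- The number of distinct colors used by a coloring `C` on the edges of `G`. -/
noncomputable def numColors {V : Type*} (G : SimpleGraph V) (C : Sym2 V → ℕ) : ℕ :=
  (C '' G.edgeSet).ncard

/-- `OPT G`: the maximum number of colors used by an edge 2-coloring of `G`. -/
noncomputable def OPT {V : Type*} (G : SimpleGraph V) : ℕ :=
  sSup {n : ℕ | ∃ C : Sym2 V → ℕ, IsEdge2Coloring G C ∧ numColors G C = n}

/-- `M` is a matching of `G`, given as a set of edges: the edges belong to `G` and
are pairwise vertex-disjoint. -/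
def IsMatchingSet {V : Type*} (G : SimpleGraph V) (M : Set (Sym2 V)) : Prop :=
  M ⊆ G.edgeSet ∧ ∀ e ∈ M, ∀ f ∈ M, e ≠ f → ∀ v : V, v ∈ e → v ∉ f

/-- `ALG G M`: number of colors produced by the matching based algorithm, i.e.
`|M|` plus the number of connected components of `G − M`. -/
noncomputable def ALG {V : Type*} (G : SimpleGraph V) (M : Set (Sym2 V)) : ℕ :=
  M.ncard + Nat.card (G.deleteEdges M).ConnectedComponent

/-- `H` is a characteristic subgraph of `G` with respect to the coloring `C`:
a subgraph of `G` containing exactly one edge of each color used by `C`. -/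
def IsCharSubgraph {V : Type*} (G : SimpleGraph V) (C : Sym2 V → ℕ)
    (H : SimpleGraph V) : Prop :=
  H ≤ G ∧ ∀ c ∈ C '' G.edgeSet, ∃! e, e ∈ H.edgeSet ∧ C e = c

set_option linter.unusedSectionVars false
set_option linter.unusedVariables false
section AuxConstruction

/-- target map for B-vertices -/
def tgtF (δ t d b : ℕ) : ℕ := if b - t < δ * d then (b - t) / δ else d + (b - t - δ * d)

def relF (δ t d u v : ℕ) : Prop := u < t ∧ t ≤ v ∧ (d ≤ u ∨ u = tgtF δ t d v)

def GC (δ t d n : ℕ) : SimpleGraph (Fin n) :=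
  SimpleGraph.fromRel (fun u v => relF δ t d u.val v.val)

def colF (δ t d a b : ℕ) : ℕ :=
  if a < d then (if (b - t) % δ = 0 then t + 1 + 2*a else t + 2 + 2*a)
  else if tgtF δ t d b = a then a + 1 else 0

def CF (δ t d n : ℕ) : Sym2 (Fin n) → ℕ :=
  Sym2.lift ⟨fun u v =>
      if u.val < t ∧ t ≤ v.val then colF δ t d u.val v.val
      else if v.val < t ∧ t ≤ u.val then colF δ t d v.val u.val
      else 0, by
    intro u v
    dsimp only
    split_ifs <;> first | rfl | omega⟩

def wrapF (n : ℕ) (hn0 : 0 < n) (x : ℕ) : Fin n := ⟨x % n, Nat.mod_lt _ hn0⟩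

def mfunF (δ t d a : ℕ) : ℕ := if a < d then t + δ * a else t + δ * d + (a - d)

lemma GC_adj {δ t d n : ℕ} {u v : Fin n} :
    (GC δ t d n).Adj u v ↔ u ≠ v ∧ (relF δ t d u.val v.val ∨ relF δ t d v.val u.val) := by
  simp [GC, SimpleGraph.fromRel_adj]

lemma CF_eval {δ t d n : ℕ} {u v : Fin n} (h1 : u.val < t) (h2 : t ≤ v.val) :
    CF δ t d n s(u, v) = colF δ t d u.val v.val := by
  simp [CF, Sym2.lift_mk, h1, h2]

lemma tgt_eq_D {δ t d a j : ℕ} (hδ : 1 ≤ δ) (ha : a < d) :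
    tgtF δ t d (t + j) = a ↔ (δ * a ≤ j ∧ j < δ * a + δ) := by
  have hj : t + j - t = j := by omega
  have e1 : δ * (a+1) = δ * a + δ := by ring
  have hmul : δ * (a+1) ≤ δ * d := Nat.mul_le_mul_left δ (by omega)
  unfold tgtF
  rw [hj]
  split_ifs with hcase
  · have hdm := Nat.div_add_mod j δ
    have hmod := Nat.mod_lt j (show 0 < δ by omega)
    constructor
    · intro hq; rw [hq] at hdm; omega
    · intro ⟨h1, h2⟩
      have : j / δ = a := by
        by_contra hne
        rcases Nat.lt_or_ge (j/δ) a with hlt | hge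
        · have h3 : δ * (j/δ + 1) ≤ δ * a := Nat.mul_le_mul_left δ (by omega)
          have e2 : δ * (j/δ + 1) = δ * (j/δ) + δ := by ring
          omega
        · have h3 : δ * (a+1) ≤ δ * (j/δ) := Nat.mul_le_mul_left δ (by omega)
          omega
      omega
  · exact ⟨fun hq => by omega, fun ⟨h1, h2⟩ => by omega⟩

lemma tgt_hub {δ t d i : ℕ} : tgtF δ t d (t + (δ * d + i)) = d + i := by
  unfold tgtF
  have h0 : t + (δ*d+i) - t = δ*d+i := by omega
  rw [h0]
  split_ifs with hcase
  · omega
  · congr 1; omega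

lemma wrapF_val {n : ℕ} (hn0 : 0 < n) {x : ℕ} (hx : x < n) : (wrapF n hn0 x).val = x :=
  Nat.mod_eq_of_lt hx

lemma ncard_Ico_nat (x y : ℕ) : (Set.Ico x y).ncard = y - x := by
  rw [← Finset.coe_Ico, Set.ncard_coe_finset, Nat.card_Ico]

lemma ncard_ge_of_Ico_sub {n : ℕ} {S : Set (Fin n)} {x y : ℕ}
    (hsub : Set.Ico x y ⊆ Fin.val '' S) : y - x ≤ S.ncard := by
  rw [← Set.ncard_image_of_injective S Fin.val_injective, ← ncard_Ico_nat x y]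
  exact Set.ncard_le_ncard hsub ((Fin.val '' S).toFinite)

lemma ncard_eq_of_eq_Ico {n : ℕ} {S : Set (Fin n)} {x y : ℕ}
    (heq : Fin.val '' S = Set.Ico x y) : S.ncard = y - x := by
  rw [← Set.ncard_image_of_injective S Fin.val_injective, heq, ncard_Ico_nat]

lemma inc_decomp {V : Type*} {G : SimpleGraph V} {v : V} {f : Sym2 V}
    (hf : f ∈ G.incidenceSet v) : ∃ w, G.Adj v w ∧ f = s(v, w) := by
  obtain ⟨hE, hv⟩ := hf
  induction f using Sym2.ind with
  | _ x y =>
    rw [Sym2.mem_iff] at hv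
    rcases hv with rfl | rfl
    · exact ⟨y, hE, rfl⟩
    · exact ⟨x, G.adj_symm hE, Sym2.eq_swap⟩

lemma ncard_le_two_of_pair {S : Set ℕ} {c1 c2 : ℕ} (h : S ⊆ {c1, c2}) : S.ncard ≤ 2 :=
  le_trans (Set.ncard_le_ncard h (Set.toFinite _))
    (le_trans (Set.ncard_insert_le c1 {c2}) (by simp))

section Main
variable {δ t d e n : ℕ} (hδ : 2 ≤ δ) (hd1 : 1 ≤ d) (heδ : δ ≤ e)
  (ht : t = d + e) (hn : n = t + δ * d + e)
include hδ hd1 heδ ht hn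

lemma nbhd_D (a : Fin n) (ha : a.val < d) :
    Fin.val '' ((GC δ t d n).neighborSet a) = Set.Ico (t + δ * a.val) (t + δ * a.val + δ) := by
  have hmul : δ * (a.val + 1) ≤ δ * d := Nat.mul_le_mul_left δ (by omega)
  have e1 : δ * (a.val + 1) = δ * a.val + δ := by ring
  ext x
  simp only [Set.mem_image, SimpleGraph.mem_neighborSet, Set.mem_Ico]
  constructor
  · rintro ⟨w, hadj, rfl⟩
    rw [GC_adj] at hadj
    obtain ⟨hne, hrel | hrel⟩ := hadj
    · obtain ⟨h1, h2, h3 | h3⟩ := hrel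
      · omega
      · have hj : w.val = t + (w.val - t) := by omega
        rw [hj] at h3
        have h4 := (tgt_eq_D (δ := δ) (t := t) (d := d) (by omega) ha).mp h3.symm
        omega
    · obtain ⟨h1, h2, _⟩ := hrel; omega
  · intro ⟨h1, h2⟩
    have hxn : x < n := by omega
    refine ⟨⟨x, hxn⟩, ?_, rfl⟩
    rw [GC_adj]
    refine ⟨?_, Or.inl ⟨by omega, by simp; omega, Or.inr ?_⟩⟩
    · intro hv; apply_fun Fin.val at hv; simp at hv; omega
    · have hx : (⟨x, hxn⟩ : Fin n).val = t + (x - t) := by simp; omega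
      rw [hx]
      exact ((tgt_eq_D (by omega) ha).mpr (by omega)).symm

lemma nbhd_hub (a : Fin n) (ha1 : d ≤ a.val) (ha2 : a.val < t) :
    Set.Ico t (t + δ) ⊆ Fin.val '' ((GC δ t d n).neighborSet a) := by
  intro x ⟨h1, h2⟩
  have hxn : x < n := by omega
  refine ⟨⟨x, hxn⟩, ?_, rfl⟩
  rw [SimpleGraph.mem_neighborSet, GC_adj]
  exact ⟨by intro hv; apply_fun Fin.val at hv; simp at hv; omega,
    Or.inl ⟨ha2, by simp; omega, Or.inl ha1⟩⟩

lemma nbhd_B (b : Fin n) (hb : t ≤ b.val) :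
    Set.Ico d (d + δ) ⊆ Fin.val '' ((GC δ t d n).neighborSet b) := by
  intro x ⟨h1, h2⟩
  have hxn : x < n := by omega
  refine ⟨⟨x, hxn⟩, ?_, rfl⟩
  rw [SimpleGraph.mem_neighborSet, GC_adj]
  exact ⟨by intro hv; apply_fun Fin.val at hv; simp at hv; omega,
    Or.inr ⟨by simp; omega, by simpa using hb, Or.inl (by simp; omega)⟩⟩

lemma deg_all (v : Fin n) : δ ≤ ((GC δ t d n).neighborSet v).ncard := by
  rcases Nat.lt_or_ge v.val d with hv | hv
  · have := ncard_eq_of_eq_Ico (nbhd_D hδ hd1 heδ ht hn v hv)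
    omega
  · rcases Nat.lt_or_ge v.val t with hv2 | hv2
    · have := ncard_ge_of_Ico_sub (nbhd_hub hδ hd1 heδ ht hn v hv hv2)
      omega
    · have := ncard_ge_of_Ico_sub (nbhd_B hδ hd1 heδ ht hn v hv2)
      omega

lemma deg_exact (hn0 : 0 < n) :
    ((GC δ t d n).neighborSet (⟨0, hn0⟩ : Fin n)).ncard = δ := by
  have := ncard_eq_of_eq_Ico
    (nbhd_D hδ hd1 heδ ht hn (⟨0, hn0⟩ : Fin n) (by show 0 < d; omega))
  omega

lemma edge_split {u v : Fin n} (h : (GC δ t d n).Adj u v) :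
    (u.val < t ∧ t ≤ v.val) ∨ (v.val < t ∧ t ≤ u.val) := by
  rw [GC_adj] at h
  obtain ⟨-, h | h⟩ := h
  · exact Or.inl ⟨h.1, h.2.1⟩
  · exact Or.inr ⟨h.1, h.2.1⟩

lemma mfun_bounds {a : ℕ} (ha : a < t) : t ≤ mfunF δ t d a ∧ mfunF δ t d a < n := by
  unfold mfunF
  split_ifs with hc
  · have h1 : δ * (a + 1) ≤ δ * d := Nat.mul_le_mul_left δ (by omega)
    have e1 : δ * (a + 1) = δ * a + δ := by ring
    omega
  · omega

lemma mfun_inj {a b : ℕ} (ha : a < t) (hb : b < t) (h : mfunF δ t d a = mfunF δ t d b) :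
    a = b := by
  unfold mfunF at h
  by_cases ca : a < d <;> by_cases cb : b < d
  · rw [if_pos ca, if_pos cb] at h
    exact Nat.eq_of_mul_eq_mul_left (show 0 < δ by omega) (by omega)
  · rw [if_pos ca, if_neg cb] at h
    have h2 := Nat.mul_le_mul_left δ (show a + 1 ≤ d by omega)
    have e1 : δ * (a + 1) = δ * a + δ := by ring
    omega
  · rw [if_neg ca, if_pos cb] at h
    have h2 := Nat.mul_le_mul_left δ (show b + 1 ≤ d by omega)
    have e1 : δ * (b + 1) = δ * b + δ := by ring
    omega
  · rw [if_neg ca, if_neg cb] at h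
    omega

lemma mfun_adj (hn0 : 0 < n) {a : ℕ} (ha : a < t) :
    (GC δ t d n).Adj (wrapF n hn0 a) (wrapF n hn0 (mfunF δ t d a)) := by
  obtain ⟨hb1, hb2⟩ := mfun_bounds hδ hd1 heδ ht hn ha
  have hv1 : (wrapF n hn0 a).val = a := wrapF_val hn0 (by omega)
  have hv2 : (wrapF n hn0 (mfunF δ t d a)).val = mfunF δ t d a := wrapF_val hn0 hb2
  rw [GC_adj]
  constructor
  · intro hq; apply_fun Fin.val at hq; omega
  · refine Or.inl ⟨by omega, by omega, ?_⟩
    by_cases hc : a < d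
    · refine Or.inr ?_
      rw [hv1, hv2]
      have hm : mfunF δ t d a = t + δ * a := by unfold mfunF; rw [if_pos hc]
      rw [hm]
      exact ((tgt_eq_D (by omega) hc).mpr (by omega)).symm
    · exact Or.inl (by omega)

lemma matching_main (hn0 : 0 < n) :
    ∃ M : Set (Sym2 (Fin n)), IsMatchingSet (GC δ t d n) M ∧ M.ncard = t := by
  classical
  set w := wrapF n hn0 with hw
  set F : ℕ → Sym2 (Fin n) := fun a => s(w a, w (mfunF δ t d a)) with hF
  refine ⟨F '' Set.Iio t, ⟨?_, ?_⟩, ?_⟩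
  · rintro x ⟨a, ha, rfl⟩
    exact (GC δ t d n).mem_edgeSet.mpr (mfun_adj hδ hd1 heδ ht hn hn0 ha)
  · rintro x ⟨a, ha, rfl⟩ y ⟨b, hb, rfl⟩ hne v hv1 hv2
    simp only [Set.mem_Iio] at ha hb
    have hva : (w a).val = a := wrapF_val hn0 (by omega)
    have hvb : (w b).val = b := wrapF_val hn0 (by omega)
    obtain ⟨ha1, ha2⟩ := mfun_bounds hδ hd1 heδ ht hn ha
    obtain ⟨hb1, hb2⟩ := mfun_bounds hδ hd1 heδ ht hn hb
    have hvma : (w (mfunF δ t d a)).val = mfunF δ t d a := wrapF_val hn0 ha2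
    have hvmb : (w (mfunF δ t d b)).val = mfunF δ t d b := wrapF_val hn0 hb2
    have hab : a ≠ b := by
      intro hq; exact hne (by rw [hq])
    rw [hF] at hv1 hv2
    simp only [Sym2.mem_iff] at hv1 hv2
    rcases hv1 with rfl | rfl <;> rcases hv2 with hq | hq <;> apply_fun Fin.val at hq
    · rw [hva, hvb] at hq; omega
    · rw [hva, hvmb] at hq; omega
    · rw [hvma, hvb] at hq; omega
    · rw [hvma, hvmb] at hq
      exact hab (mfun_inj hδ hd1 heδ ht hn ha hb hq)
  · rw [Set.ncard_image_of_injOn, ← Finset.coe_Iio, Set.ncard_coe_finset, Nat.card_Iio]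
    intro a ha b hb hq
    simp only [Set.mem_Iio] at ha hb
    have hva : (w a).val = a := wrapF_val hn0 (by omega)
    have hvb : (w b).val = b := wrapF_val hn0 (by omega)
    obtain ⟨ha1, ha2⟩ := mfun_bounds hδ hd1 heδ ht hn ha
    obtain ⟨hb1, hb2⟩ := mfun_bounds hδ hd1 heδ ht hn hb
    have hvma : (w (mfunF δ t d a)).val = mfunF δ t d a := wrapF_val hn0 ha2
    have hvmb : (w (mfunF δ t d b)).val = mfunF δ t d b := wrapF_val hn0 hb2
    rw [hF, Sym2.eq_iff] at hq
    rcases hq with ⟨h1, h2⟩ | ⟨h1, h2⟩ <;> apply_fun Fin.val at h1 <;> omega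

lemma matching_le (M' : Set (Sym2 (Fin n))) (hM : IsMatchingSet (GC δ t d n) M') :
    M'.ncard ≤ t := by
  classical
  obtain ⟨hsub, hdisj⟩ := hM
  have hA : ∀ f ∈ M', ∃ x : Fin n, x ∈ f ∧ x.val < t := by
    intro f hf
    induction f using Sym2.ind with
    | _ u v =>
      have hadj : (GC δ t d n).Adj u v := hsub hf
      rcases edge_split hδ hd1 heδ ht hn hadj with hc | hc
      · exact ⟨u, Sym2.mem_mk_left u v, hc.1⟩
      · exact ⟨v, Sym2.mem_mk_right u v, hc.1⟩
  have hne : Nonempty (Fin n) := ⟨⟨0, by omega⟩⟩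
  set F : Sym2 (Fin n) → Fin n := fun f =>
    if hf : ∃ x : Fin n, x ∈ f ∧ x.val < t then hf.choose else Classical.arbitrary _ with hFdef
  have hFmem : ∀ f ∈ M', F f ∈ f ∧ (F f).val < t := by
    intro f hf
    have hex := hA f hf
    rw [hFdef]
    simp only [dif_pos hex]
    exact hex.choose_spec
  have hinj : Set.InjOn F M' := by
    intro f1 h1 f2 h2 hq
    by_contra hne2
    have m1 := hFmem f1 h1
    have m2 := hFmem f2 h2
    exact (hdisj f1 h1 f2 h2 hne2 (F f1) m1.1) (hq ▸ m2.1)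
  calc M'.ncard = (F '' M').ncard := (Set.ncard_image_of_injOn hinj).symm
    _ ≤ ({v : Fin n | v.val < t} : Set (Fin n)).ncard := by
        refine Set.ncard_le_ncard ?_ (Set.toFinite _)
        rintro x ⟨f, hf, rfl⟩
        exact (hFmem f hf).2
    _ = t := by
        have himg : Fin.val '' {v : Fin n | v.val < t} = Set.Ico 0 t := by
          ext x
          simp only [Set.mem_image, Set.mem_setOf_eq, Set.mem_Ico]
          constructor
          · rintro ⟨v, hv, rfl⟩; omega
          · intro hx; exact ⟨⟨x, by omega⟩, by simpa using hx.2, rfl⟩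
        rw [← Set.ncard_image_of_injective _ Fin.val_injective, himg,
          ← Finset.coe_Ico, Set.ncard_coe_finset, Nat.card_Ico]
        omega

lemma edge2col : IsEdge2Coloring (GC δ t d n) (CF δ t d n) := by
  intro v
  rcases Nat.lt_or_ge v.val t with hv | hv
  · rcases Nat.lt_or_ge v.val d with hvd | hvd
    · apply ncard_le_two_of_pair (c1 := t + 1 + 2*v.val) (c2 := t + 2 + 2*v.val)
      rintro c ⟨f, hf, rfl⟩
      obtain ⟨w, hadj, rfl⟩ := inc_decomp hf
      rw [GC_adj] at hadj
      obtain ⟨hne, hrel | hrel⟩ := hadj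
      · rw [CF_eval hrel.1 hrel.2.1]
        unfold colF
        rw [if_pos hvd]
        split_ifs <;> simp
      · exact absurd hrel.2.1 (by omega)
    · apply ncard_le_two_of_pair (c1 := 0) (c2 := v.val + 1)
      rintro c ⟨f, hf, rfl⟩
      obtain ⟨w, hadj, rfl⟩ := inc_decomp hf
      rw [GC_adj] at hadj
      obtain ⟨hne, hrel | hrel⟩ := hadj
      · rw [CF_eval hrel.1 hrel.2.1]
        unfold colF
        rw [if_neg (by omega)]
        split_ifs <;> simp
      · exact absurd hrel.2.1 (by omega)
  · apply ncard_le_two_of_pair (c1 := 0) (c2 := colF δ t d (tgtF δ t d v.val) v.val)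
    rintro c ⟨f, hf, rfl⟩
    obtain ⟨w, hadj, rfl⟩ := inc_decomp hf
    rw [GC_adj] at hadj
    obtain ⟨hne, hrel | hrel⟩ := hadj
    · exact absurd hrel.1 (by omega)
    · obtain ⟨hw1, hw2, hw3⟩ := hrel
      have hswap : s(v, w) = s(w, v) := Sym2.eq_swap
      rw [hswap, CF_eval hw1 hw2]
      by_cases hwt : w.val = tgtF δ t d v.val
      · right; rw [hwt]; exact Set.mem_singleton _
      · left
        have hwd : d ≤ w.val := by
          rcases hw3 with hcc | hcc
          · exact hcc
          · exact absurd hcc hwt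
        unfold colF
        rw [if_neg (by omega), if_neg (by intro hq; exact hwt hq.symm)]

lemma colors_ge : t + d ≤ numColors (GC δ t d n) (CF δ t d n) := by
  classical
  set g : ℕ → ℕ := fun i => if i < e then d + i + 1 else t + 1 + (i - e) with hg
  have hmem : ∀ i, i < t + d → g i ∈ CF δ t d n '' (GC δ t d n).edgeSet := by
    intro i hi
    rcases Nat.lt_or_ge i e with hie | hie
    · have ha : d + i < t := by omega
      have hb : t + (δ * d + i) < n := by omega
      refine ⟨s((⟨d + i, by omega⟩ : Fin n), (⟨t + (δ * d + i), hb⟩ : Fin n)), ?_, ?_⟩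
      · rw [SimpleGraph.mem_edgeSet, GC_adj]
        refine ⟨?_, Or.inl ⟨by simpa using ha, by simp, Or.inl (by simp)⟩⟩
        intro hq; apply_fun Fin.val at hq; simp at hq; omega
      · rw [CF_eval (by simpa using ha) (by simp)]
        unfold colF
        rw [if_neg (by simp), if_pos]
        · simp [hg, hie]
        · exact tgt_hub
    · set k := i - e with hk
      have hk2 : k < 2 * d := by omega
      have hdm := Nat.div_add_mod k 2
      have hm2 : k % 2 < 2 := Nat.mod_lt _ (by omega)
      set a := k / 2 with ha'
      have ha : a < d := by omega
      have hmul : δ * (a + 1) ≤ δ * d := Nat.mul_le_mul_left δ (by omega)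
      have e1 : δ * (a + 1) = δ * a + δ := by ring
      have hb : t + (δ * a + k % 2) < n := by omega
      refine ⟨s((⟨a, by omega⟩ : Fin n), (⟨t + (δ * a + k % 2), hb⟩ : Fin n)), ?_, ?_⟩
      · rw [SimpleGraph.mem_edgeSet, GC_adj]
        refine ⟨?_, Or.inl ⟨by simp; omega, by simp, Or.inr ?_⟩⟩
        · intro hq; apply_fun Fin.val at hq; simp at hq; omega
        · show (⟨a, _⟩ : Fin n).val = tgtF δ t d (⟨t + (δ * a + k % 2), hb⟩ : Fin n).val
          simp only
          exact ((tgt_eq_D (by omega) ha).mpr (by omega)).symm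
      · rw [CF_eval (by simp; omega) (by simp)]
        unfold colF
        rw [if_pos (by simpa using ha)]
        simp only
        have h2 : t + (δ * a + k % 2) - t = δ * a + k % 2 := by omega
        rw [h2]
        have h3 : (δ * a + k % 2) % δ = k % 2 := by
          rw [Nat.mul_add_mod]
          exact Nat.mod_eq_of_lt (by omega)
        rw [h3]
        split_ifs with hm <;>
          · simp only [hg]
            rw [if_neg (show ¬ i < e by omega)]
            omega
  have hinj : Set.InjOn g (Set.Iio (t + d)) := by
    intro i hi j hj hq
    simp only [Set.mem_Iio] at hi hj
    simp only [hg] at hq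
    split_ifs at hq <;> omega
  calc t + d = (Set.Iio (t + d)).ncard := by
        rw [← Finset.coe_Iio, Set.ncard_coe_finset, Nat.card_Iio]
    _ = (g '' Set.Iio (t + d)).ncard := (Set.ncard_image_of_injOn hinj).symm
    _ ≤ numColors (GC δ t d n) (CF δ t d n) := by
        apply Set.ncard_le_ncard
        · rintro x ⟨i, hi, rfl⟩
          exact hmem i (by simpa using hi)
        · exact (((GC δ t d n).edgeSet.toFinite).image _)

end Main
end AuxConstruction

/-- Tightness of the general bound: for `3 ≤ κ < δ − 3` and suitable `t`, there is a graph
on `κ·t` vertices with minimum degree exactly `δ` and maximum matching of size exactly `t`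
admitting an edge 2-coloring with at least `t·(1 + (κ − 2)/(δ − 1))` colors. -/

theorem tight_example_general {δ κ t h : ℕ} (hκ3 : 3 ≤ κ) (hκδ : κ + 3 < δ) (ht0 : 0 < t)
    (htlarge : ((δ : ℝ) - 1) ^ 2 / ((δ : ℝ) + 1 - (κ : ℝ)) < (t : ℝ))
    (hh0 : 0 < h)
    (hhval : (h : ℝ) = (t : ℝ) * ((δ : ℝ) + 1 - (κ : ℝ)) / ((δ : ℝ) - 1) - ((δ : ℝ) - 1)) :
    ∃ G : SimpleGraph (Fin (κ * t)),
      (∀ v, δ ≤ (G.neighborSet v).ncard) ∧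
      (∃ v, (G.neighborSet v).ncard = δ) ∧
      (∃ M : Set (Sym2 (Fin (κ * t))), IsMatchingSet G M ∧ M.ncard = t ∧
        ∀ M' : Set (Sym2 (Fin (κ * t))), IsMatchingSet G M' → M'.ncard ≤ t) ∧
      ∃ C : Sym2 (Fin (κ * t)) → ℕ, IsEdge2Coloring G C ∧
        (t : ℝ) * (1 + ((κ : ℝ) - 2) / ((δ : ℝ) - 1)) ≤ (numColors G C : ℝ) := by
  classical
  have hδ7 : 7 ≤ δ := by omega
  have hδR : ((δ : ℝ) - 1) ≠ 0 := by
    have : (7 : ℝ) ≤ (δ : ℝ) := by exact_mod_cast hδ7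
    linarith
  -- key real identity
  have hkeyR : ((h : ℝ) + (δ : ℝ) - 1) * ((δ : ℝ) - 1) = (t : ℝ) * ((δ : ℝ) + 1 - (κ : ℝ)) := by
    rw [hhval]
    field_simp
    ring
  -- key natural identity
  have hkeyN : (h + (δ - 1)) * (δ - 1) = t * (δ + 1 - κ) := by
    have hc : (((h + (δ - 1)) * (δ - 1) : ℕ) : ℝ) = ((t * (δ + 1 - κ) : ℕ) : ℝ) := by
      push_cast [Nat.cast_sub (show 1 ≤ δ by omega), Nat.cast_sub (show κ ≤ δ + 1 by omega)]
      linarith [hkeyR]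
    exact_mod_cast hc
  set e := h + (δ - 1) with he_def
  have heδ : δ ≤ e := by omega
  have he_le_t : e ≤ t := by
    have h1 : t * (δ + 1 - κ) ≤ t * (δ - 1) := Nat.mul_le_mul_left t (by omega)
    have h2 : e * (δ - 1) ≤ t * (δ - 1) := by omega
    exact Nat.le_of_mul_le_mul_right h2 (by omega)
  set d := t - e with hd_def
  have ht : t = d + e := by omega
  -- natural identity for d
  have hdZ : (d : ℤ) * ((δ : ℤ) - 1) = (t : ℤ) * ((κ : ℤ) - 2) := by
    have hkZ : ((h : ℤ) + ((δ : ℤ) - 1)) * ((δ : ℤ) - 1) = (t : ℤ) * ((δ : ℤ) + 1 - (κ : ℤ)) := by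
      have := hkeyN
      have hc : (((h + (δ - 1)) * (δ - 1) : ℕ) : ℤ) = ((t * (δ + 1 - κ) : ℕ) : ℤ) := by
        exact_mod_cast congrArg (Nat.cast : ℕ → ℤ) this
      push_cast [Nat.cast_sub (show 1 ≤ δ by omega), Nat.cast_sub (show κ ≤ δ + 1 by omega)] at hc
      linarith
    have hdZ' : (d : ℤ) = (t : ℤ) - ((h : ℤ) + ((δ : ℤ) - 1)) := by
      rw [hd_def]
      push_cast [Nat.cast_sub he_le_t, he_def, Nat.cast_sub (show h + (δ - 1) ≤ t by omega), Nat.cast_sub (show 1 ≤ δ by omega)]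
      ring
    rw [hdZ']
    linear_combination -hkZ
  have hdN : d * (δ - 1) = t * (κ - 2) := by
    have hc : ((d * (δ - 1) : ℕ) : ℤ) = ((t * (κ - 2) : ℕ) : ℤ) := by
      push_cast [Nat.cast_sub (show 1 ≤ δ by omega), Nat.cast_sub (show 2 ≤ κ by omega)]
      linarith [hdZ]
    exact_mod_cast hc
  have hd1 : 1 ≤ d := by
    rcases Nat.eq_zero_or_pos d with h0 | h0
    · rw [h0, zero_mul] at hdN
      have h1 : t * 1 ≤ t * (κ - 2) := Nat.mul_le_mul_left t (by omega)
      omega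
    · exact h0
  have hnn : κ * t = t + δ * d + e := by
    have hc : ((κ * t : ℕ) : ℤ) = ((t + δ * d + e : ℕ) : ℤ) := by
      push_cast [he_def, Nat.cast_sub (show 1 ≤ δ by omega)]
      have hdZ' : (d : ℤ) = (t : ℤ) - ((h : ℤ) + ((δ : ℤ) - 1)) := by
        rw [hd_def]
        push_cast [Nat.cast_sub he_le_t, he_def, Nat.cast_sub (show h + (δ - 1) ≤ t by omega), Nat.cast_sub (show 1 ≤ δ by omega)]
        ring
      linear_combination -hdZ - hdZ'
    exact_mod_cast hc
  have hn0 : 0 < κ * t := by positivity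
  have hδ2 : 2 ≤ δ := by omega
  refine ⟨GC δ t d (κ * t), ?_, ?_, ?_, ?_⟩
  · exact deg_all hδ2 hd1 heδ ht hnn
  · exact ⟨⟨0, hn0⟩, deg_exact hδ2 hd1 heδ ht hnn hn0⟩
  · obtain ⟨M, hM1, hM2⟩ := matching_main hδ2 hd1 heδ ht hnn hn0
    exact ⟨M, hM1, hM2, fun M' hM' => matching_le hδ2 hd1 heδ ht hnn M' hM'⟩
  · refine ⟨CF δ t d (κ * t), edge2col hδ2 hd1 heδ ht hnn, ?_⟩
    have hcol := colors_ge hδ2 hd1 heδ ht hnn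
    have hdR : (d : ℝ) * ((δ : ℝ) - 1) = (t : ℝ) * ((κ : ℝ) - 2) := by
      exact_mod_cast congrArg (Int.cast : ℤ → ℝ) hdZ
    have htarget : (t : ℝ) * (1 + ((κ : ℝ) - 2) / ((δ : ℝ) - 1)) = (t : ℝ) + (d : ℝ) := by
      field_simp
      linarith [hdR]
    rw [htarget]
    have : ((t + d : ℕ) : ℝ) ≤ ((numColors (GC δ t d (κ * t)) (CF δ t d (κ * t)) : ℕ) : ℝ) := by
      exact_mod_cast hcol
    push_cast at this
    linarith
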